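/- Let n ≥ 1 and k ≥ 1, and let D be a map assigning to each k-tuple (y¹, …, y^k) of points of {0,1}^n a probability mass function D(· | y¹, …, y^k) on {0,1}^n. Then D is a k-ary unbiased distribution family if and only if for every Hamming automorphism α of {0,1}^n, every x ∈ {0,1}^n, and every k-tuple (y¹, …, y^k), one has D(x | y¹, …, y^k) = D(α(x) | α(y¹), …, α(y^k)). -/

import Mathlib

open scoped ENNReal

/-- Bit strings of length `n`. -/
abbrev Point (n : ℕ) := Fin n → Bool

/-- Pointwise XOR (the `⊕`-shift) of bit strings. -/
def pxor {n : ℕ} (x z : Point n) : Point n := fun i => xor (x i) (z i)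

/-- The Hamming distance of two bit strings. -/
def hamming {n : ℕ} (x y : Point n) : ℕ :=
  (Finset.univ.filter fun i => x i ≠ y i).card

/-- `D` is a `k`-ary unbiased distribution family: it is invariant under
`⊕`-shifts and under permutations of the positions. -/
def IsUnbiased {n k : ℕ} (D : (Fin k → Point n) → PMF (Point n)) : Prop :=
  (∀ (ys : Fin k → Point n) (x z : Point n),
      D ys x = D (fun i => pxor (ys i) z) (pxor x z)) ∧
  (∀ (ys : Fin k → Point n) (x : Point n) (σ : Equiv.Perm (Fin n)),
      D ys x = D (fun i => (ys i) ∘ σ) (x ∘ σ))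

lemma pxor_pxor {n} (x z : Point n) : pxor (pxor x z) z = x := by
  funext i; simp [pxor]

lemma hamming_pxor {n} (x y z : Point n) :
    hamming (pxor x z) (pxor y z) = hamming x y := by
  unfold hamming pxor
  congr 1
  apply Finset.filter_congr
  intro i _
  cases x i <;> cases y i <;> cases z i <;> simp

lemma hamming_comp_perm {n} (x y : Point n) (σ : Equiv.Perm (Fin n)) :
    hamming (x ∘ σ) (y ∘ σ) = hamming x y := by
  unfold hamming
  apply Finset.card_nbij' σ σ.symm <;> intro a ha <;> simp_all

/-- The all-zero string. -/
def zeroP (n : ℕ) : Point n := fun _ => false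

/-- The `i`-th unit string. -/
def eP {n : ℕ} (i : Fin n) : Point n := fun j => decide (j = i)

lemma eP_inj {n} : Function.Injective (eP (n := n)) := by
  intro i j h
  have := congrFun h i
  simpa [eP] using this

lemma weight_eP {n} (i : Fin n) : hamming (eP i) (zeroP n) = 1 := by
  unfold hamming eP zeroP
  have : (Finset.univ.filter fun j : Fin n => (decide (j = i) : Bool) ≠ false) = {i} := by
    ext j; simp
  rw [this]; simp

lemma weight_one_eq_eP {n} (y : Point n) (h : hamming y (zeroP n) = 1) :
    ∃ i, y = eP i := by
  unfold hamming zeroP at h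
  obtain ⟨i, hi⟩ := Finset.card_eq_one.mp h
  refine ⟨i, funext fun j => ?_⟩
  have hmem : ∀ j : Fin n, y j = true ↔ j = i := by
    intro j
    constructor
    · intro hy
      have : j ∈ (Finset.univ.filter fun a => y a ≠ (false : Bool)) := by simp [hy]
      rw [hi] at this; simpa using this
    · intro hji
      subst hji
      have : j ∈ ({j} : Finset (Fin n)) := by simp
      rw [← hi] at this
      simpa using Finset.mem_filter.mp this |>.2
  by_cases hji : j = i
  · subst hji; simp [eP, (hmem j).mpr rfl]
  · have hyf : y j = false := Bool.eq_false_iff.mpr fun hy => hji ((hmem j).mp hy)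
    simp [eP, hji, hyf]

lemma coord_char {n} (x : Point n) (i : Fin n) :
    x i = true ↔ hamming x (eP i) < hamming x (zeroP n) := by
  unfold hamming eP zeroP
  rw [Finset.card_filter, Finset.card_filter]
  rw [← Finset.sum_erase_add _ _ (Finset.mem_univ i),
      ← Finset.sum_erase_add _ _ (Finset.mem_univ i)]
  have hS : (∑ j ∈ Finset.univ.erase i, if x j ≠ (decide (j = i) : Bool) then 1 else 0) =
      (∑ j ∈ Finset.univ.erase i, if x j ≠ (false : Bool) then 1 else 0) := by
    apply Finset.sum_congr rfl
    intro j hj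
    have : j ≠ i := Finset.ne_of_mem_erase hj
    simp [this]
  rw [hS]
  cases h : x i <;> simp [h]

/-- Characterization of unbiasedness: a family of distributions is `k`-ary
unbiased if and only if it is invariant under all Hamming automorphisms. -/
theorem stmt14 (n k : ℕ) (hn : 1 ≤ n) (hk : 1 ≤ k)
    (D : (Fin k → Point n) → PMF (Point n)) :
    IsUnbiased D ↔
      ∀ α : Point n ≃ Point n,
        (∀ x y : Point n, hamming (α x) (α y) = hamming x y) →
        ∀ (x : Point n) (ys : Fin k → Point n),
          D ys x = D (fun i => α (ys i)) (α x) := by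
  constructor
  · rintro ⟨hX, hP⟩ α hα x ys
    set z : Point n := α (zeroP n) with hz
    -- β a := pxor (α a) z is an isometry fixing 0
    set β : Point n → Point n := fun a => pxor (α a) z with hβ
    have hβiso : ∀ a b, hamming (β a) (β b) = hamming a b := by
      intro a b; rw [hamming_pxor, hα]
    have hβ0 : β (zeroP n) = zeroP n := by
      funext i; simp [hβ, pxor, zeroP, hz]
    have hβinj : Function.Injective β := by
      intro a b hab
      have : α a = α b := by
        have := congrArg (fun w => pxor w z) hab
        simpa [hβ, pxor_pxor] using this
      exact α.injective this
    -- β maps unit vectors to unit vectors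
    have hτ : ∀ i : Fin n, ∃ j, β (eP i) = eP j := by
      intro i
      apply weight_one_eq_eP
      rw [← hβ0, hβiso, weight_eP]
    choose τ hτ' using hτ
    have hτinj : Function.Injective τ := by
      intro i j hij
      apply eP_inj
      apply hβinj
      rw [hτ' i, hτ' j, hij]
    have hτbij : Function.Bijective τ := (Finite.injective_iff_bijective).mp hτinj
    let σ : Equiv.Perm (Fin n) := Equiv.ofBijective τ hτbij
    have hσ : ∀ i, σ i = τ i := fun i => rfl
    -- key decomposition: (β a) (τ i) = a i
    have hkey : ∀ (a : Point n) (i : Fin n), (β a) (τ i) = a i := by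
      intro a i
      have h1 : (β a) (τ i) = true ↔ a i = true := by
        rw [coord_char, coord_char (x := a), ← hβiso a (eP i), ← hβiso a (zeroP n),
          hτ', hβ0]
      cases hb : (β a) (τ i) <;> cases h : a i <;> simp_all
    have hαeq : ∀ a : Point n, α a = pxor (a ∘ σ.symm) z := by
      intro a
      have : β a = a ∘ ⇑σ.symm := by
        funext j
        have : (β a) (τ (σ.symm j)) = a (σ.symm j) := hkey a (σ.symm j)
        have hτσ : τ (σ.symm j) = j := by
          have := σ.apply_symm_apply j
          simpa [hσ] using this
        rw [hτσ] at this
        simpa using this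
      calc α a = pxor (β a) z := by rw [hβ, pxor_pxor]
        _ = pxor (a ∘ ⇑σ.symm) z := by rw [this]
    calc D ys x = D (fun i => (ys i) ∘ ⇑σ.symm) (x ∘ ⇑σ.symm) := hP ys x σ.symm
      _ = D (fun i => pxor ((ys i) ∘ ⇑σ.symm) z) (pxor (x ∘ ⇑σ.symm) z) := hX _ _ z
      _ = D (fun i => α (ys i)) (α x) := by
          have hfun : (fun i => pxor ((ys i) ∘ ⇑σ.symm) z) = fun i => α (ys i) := by
            funext i; rw [hαeq (ys i)]
          rw [hfun, ← hαeq x]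
  · intro h
    constructor
    · intro ys x z
      let α : Point n ≃ Point n :=
        ⟨fun a => pxor a z, fun a => pxor a z, fun a => pxor_pxor a z, fun a => pxor_pxor a z⟩
      exact h α (fun a b => hamming_pxor a b z) x ys
    · intro ys x σ
      let α : Point n ≃ Point n :=
        ⟨fun a => a ∘ σ, fun a => a ∘ σ.symm,
         fun a => by funext j; simp,
         fun a => by funext j; simp⟩
      exact h α (fun a b => hamming_comp_perm a b σ) x ys
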